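/- Let G be a directed graph with capacity assignment c on darts, and let f be a feasible flow. Then f is a maximum flow from the source set S to the sink set T if and only if there is no residual path from any node of S to any node of T in the residual graph G_f. -/

import Mathlib

/-- A directed graph given by darts: each dart has a tail, a head, and a reverse dart. -/
structure Dgraph (V D : Type) where
  tail : D → V
  head : D → V
  rev : D → D
  rev_rev : ∀ d, rev (rev d) = d
  tail_rev : ∀ d, tail (rev d) = head d
  head_rev : ∀ d, head (rev d) = tail d

namespace Dgraph

variable {V D : Type}

/-- an antisymmetric flow assignment -/
def Antisym (G : Dgraph V D) (f : D → ℝ) : Prop :=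
  ∀ d, f (G.rev d) = - f d

/-- net inflow of a flow assignment at a node -/
noncomputable def inflow [Fintype D] [DecidableEq V] (G : Dgraph V D) (f : D → ℝ) (v : V) : ℝ :=
  ∑ d ∈ Finset.univ.filter (fun d => G.head d = v), f d

/-- one step along a dart of strictly positive capacity -/
def ResStep (G : Dgraph V D) (cap : D → ℝ) (u v : V) : Prop :=
  ∃ d, G.tail d = u ∧ G.head d = v ∧ 0 < cap d

/-- existence of a path all of whose darts have strictly positive capacity -/
def ResReach (G : Dgraph V D) (cap : D → ℝ) (u v : V) : Prop :=
  Relation.ReflTransGen (G.ResStep cap) u v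

/-- a pseudoflow: antisymmetric and respecting all capacities -/
def Pseudoflow (G : Dgraph V D) (c f : D → ℝ) : Prop :=
  G.Antisym f ∧ ∀ d, f d ≤ c d

end Dgraph

open Dgraph Finset
open scoped Classical

/-- value of a conservative flow equals net flow across the cut determined by A. -/
lemma value_eq_cut {V D : Type} [Fintype D] [DecidableEq V]
    (G : Dgraph V D) (S T : Finset V)
    (g : D → ℝ) (hanti : G.Antisym g)
    (hcons : ∀ v, v ∉ S → v ∉ T → G.inflow g v = 0)
    (A : V → Prop) (hSA : ∀ s ∈ S, A s) (hTA : ∀ t ∈ T, ¬ A t) :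
    ∑ t ∈ T, G.inflow g t
      = ∑ d ∈ univ.filter (fun d => A (G.tail d) ∧ ¬ A (G.head d)), g d := by
  classical
  set W : Finset V := (univ.image G.head) ∪ T with hW
  set t' : Finset V := W.filter (fun v => ¬ A v) with ht'
  -- Step 1: value = sum of inflow over t'
  have h1 : ∑ t ∈ T, G.inflow g t = ∑ v ∈ t', G.inflow g v := by
    apply Finset.sum_subset
    · intro v hv
      simp only [ht', mem_filter, hW, mem_union]
      exact ⟨Or.inr hv, hTA v hv⟩
    · intro v hv hvT
      have hvA : ¬ A v := (mem_filter.mp hv).2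
      exact hcons v (fun hvS => hvA (hSA v hvS)) hvT
  -- Step 2: sum of inflow over t' = sum of g over darts with head not in A
  have h2 : ∑ v ∈ t', G.inflow g v
      = ∑ d ∈ univ.filter (fun d => ¬ A (G.head d)), g d := by
    rw [← Finset.sum_fiberwise_of_maps_to (g := G.head) (t := t')]
    · apply Finset.sum_congr rfl
      intro v hv
      have hvA : ¬ A v := (mem_filter.mp hv).2
      unfold Dgraph.inflow
      apply Finset.sum_congr _ (fun _ _ => rfl)
      ext d
      simp only [mem_filter, mem_univ, true_and]
      constructor
      · intro h; exact ⟨h ▸ hvA, h⟩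
      · exact fun h => h.2
    · intro d hd
      simp only [mem_filter, mem_univ, true_and] at hd
      simp only [ht', mem_filter, hW, mem_union]
      exact ⟨Or.inl (mem_image_of_mem _ (mem_univ d)), hd⟩
  -- Step 3: darts with both ends outside A sum to zero
  have h3 : ∑ d ∈ univ.filter (fun d => ¬ A (G.tail d) ∧ ¬ A (G.head d)), g d = 0 := by
    set B := univ.filter (fun d => ¬ A (G.tail d) ∧ ¬ A (G.head d)) with hB
    have hrevmem : ∀ d ∈ B, G.rev d ∈ B := by
      intro d hd
      simp only [hB, mem_filter, mem_univ, true_and, G.tail_rev, G.head_rev] at *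
      exact ⟨hd.2, hd.1⟩
    have : ∑ d ∈ B, g d = ∑ d ∈ B, g (G.rev d) := by
      apply Finset.sum_nbij' (i := G.rev) (j := G.rev) hrevmem hrevmem
      · intro d _; exact G.rev_rev d
      · intro d _; exact G.rev_rev d
      · intro d _; rw [G.rev_rev]
    have h4 : ∑ d ∈ B, g (G.rev d) = - ∑ d ∈ B, g d := by
      rw [← Finset.sum_neg_distrib]
      exact Finset.sum_congr rfl (fun d _ => hanti d)
    linarith [this, h4]
  -- combine: split the head-not-in-A sum by tail in A or not
  rw [h1, h2]
  have hsplit : univ.filter (fun d => ¬ A (G.head d))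
      = univ.filter (fun d => A (G.tail d) ∧ ¬ A (G.head d))
        ∪ univ.filter (fun d => ¬ A (G.tail d) ∧ ¬ A (G.head d)) := by
    ext d; simp only [mem_filter, mem_univ, true_and, mem_union]; tauto
  have hdisj : Disjoint (univ.filter (fun d => A (G.tail d) ∧ ¬ A (G.head d)))
      (univ.filter (fun d => ¬ A (G.tail d) ∧ ¬ A (G.head d))) := by
    rw [Finset.disjoint_left]
    intro d hd hd'
    simp only [mem_filter] at hd hd'
    exact hd'.2.1 hd.2.1
  rw [hsplit, Finset.sum_union hdisj, h3, add_zero]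

/-- a walk in G given by a list of darts -/
def IsWalk {V D : Type} (G : Dgraph V D) : V → List D → V → Prop
  | s, [], t => s = t
  | s, d :: L, t => G.tail d = s ∧ IsWalk G (G.head d) L t

lemma reach_walk {V D : Type} (G : Dgraph V D) (cap : D → ℝ) {s t : V}
    (h : G.ResReach cap s t) :
    ∃ L : List D, IsWalk G s L t ∧ ∀ d ∈ L, 0 < cap d := by
  induction h using Relation.ReflTransGen.head_induction_on with
  | refl => exact ⟨[], rfl, by simp⟩
  | head hstep _ ih =>
    obtain ⟨d, hd1, hd2, hd3⟩ := hstep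
    obtain ⟨L, hL1, hL2⟩ := ih
    exact ⟨d :: L, ⟨hd1, hd2 ▸ hL1⟩, by
      intro e he
      rcases List.mem_cons.mp he with h | h
      · exact h ▸ hd3
      · exact hL2 e h⟩

lemma walk_count {V D : Type} [DecidableEq V] (G : Dgraph V D) :
    ∀ (L : List D) (s t : V), IsWalk G s L t → ∀ v : V,
    ((L.filter (fun d => G.head d = v)).length : ℝ)
      - (L.filter (fun d => G.tail d = v)).length
    = (if v = t then 1 else 0) - (if v = s then 1 else 0) := by
  intro L
  induction L with
  | nil =>
    intro s t h v
    cases h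
    simp
  | cons d L ih =>
    intro s t h v
    obtain ⟨h1, h2⟩ := h
    have ih' := ih (G.head d) t h2 v
    subst h1
    simp only [List.filter_cons, apply_ite List.length, List.length_cons, decide_eq_true_eq]
    simp only [show ∀ a : V, (v = a) = (a = v) from fun a => propext eq_comm] at ih' ⊢
    split_ifs at ih' ⊢ <;> push_cast at ih' ⊢ <;> linarith

lemma exists_min_list {D : Type} (r : D → ℝ) :
    ∀ L : List D, L ≠ [] → (∀ d ∈ L, 0 < r d) → ∃ δ : ℝ, 0 < δ ∧ ∀ d ∈ L, δ ≤ r d := by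
  intro L
  induction L with
  | nil => intro h; exact absurd rfl h
  | cons d L ih =>
    intro _ hpos
    rcases eq_or_ne L [] with rfl | hL
    · exact ⟨r d, hpos d (by simp), by simp⟩
    · obtain ⟨δ, hδ, hδ'⟩ := ih hL (fun e he => hpos e (List.mem_cons_of_mem _ he))
      refine ⟨min δ (r d), lt_min hδ (hpos d (by simp)), ?_⟩
      intro e he
      rcases List.mem_cons.mp he with h | h
      · exact h ▸ min_le_right _ _
      · exact le_trans (min_le_left _ _) (hδ' e h)

lemma sum_count_filter {D : Type} [Fintype D] [DecidableEq D] (L : List D)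
    (P : D → Prop) [DecidablePred P] :
    ∑ d ∈ univ.filter P, (L.count d : ℝ) = (L.filter (fun d => P d)).length := by
  induction L with
  | nil => simp
  | cons a L ih =>
    simp only [List.count_cons, beq_iff_eq, List.filter_cons, decide_eq_true_eq]
    push_cast
    rw [Finset.sum_add_distrib, ih]
    by_cases hPa : P a <;>
      simp [hPa, Finset.sum_ite_eq, Finset.sum_ite_eq', apply_ite List.length]

lemma augment {V D : Type} [Fintype D] [DecidableEq V]
    (G : Dgraph V D) (c : D → ℝ) (S T : Finset V) (hST : Disjoint S T)
    (f : D → ℝ) (hf : G.Pseudoflow c f)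
    (hcons : ∀ v, v ∉ S → v ∉ T → G.inflow f v = 0)
    (hpath : ∃ s ∈ S, ∃ t ∈ T, G.ResReach (fun d => c d - f d) s t) :
    ∃ f' : D → ℝ, G.Pseudoflow c f' ∧
      (∀ v, v ∉ S → v ∉ T → G.inflow f' v = 0) ∧
      ∑ t ∈ T, G.inflow f t < ∑ t ∈ T, G.inflow f' t := by
  classical
  obtain ⟨s, hs, t, ht, hreach⟩ := hpath
  obtain ⟨L, hLwalk, hLpos⟩ := reach_walk G _ hreach
  have hst : s ≠ t := fun h => (Finset.disjoint_left.mp hST) hs (h ▸ ht)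
  have hLne : L ≠ [] := by
    rintro rfl
    exact hst hLwalk
  obtain ⟨δ, hδ, hδle⟩ := exists_min_list (fun d => c d - f d) L hLne hLpos
  have hlen : 0 < (L.length : ℝ) := by
    have := List.length_pos_iff.mpr hLne
    exact_mod_cast this
  set ε : ℝ := δ / L.length with hε
  have hεpos : 0 < ε := div_pos hδ hlen
  have hεlen : ε * L.length = δ := by
    rw [hε]; field_simp
  set f' : D → ℝ := fun d => f d + ε * ((L.count d : ℝ) - (L.count (G.rev d) : ℝ)) with hf'
  have hanti' : G.Antisym f' := by
    intro d
    simp only [hf', G.rev_rev]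
    have := hf.1 d
    linarith
  have hcap' : ∀ d, f' d ≤ c d := by
    intro d
    by_cases hd : d ∈ L
    · have h1 : (L.count d : ℝ) ≤ L.length := by exact_mod_cast (L.count_le_length (a := d))
      have h2 : (0 : ℝ) ≤ L.count (G.rev d) := by positivity
      have h3 : δ ≤ c d - f d := hδle d hd
      have : ε * ((L.count d : ℝ) - (L.count (G.rev d) : ℝ)) ≤ ε * L.length := by
        apply mul_le_mul_of_nonneg_left _ hεpos.le
        linarith
      simp only [hf']
      nlinarith
    · have h1 : L.count d = 0 := List.count_eq_zero.mpr hd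
      have h2 : (0 : ℝ) ≤ L.count (G.rev d) := by positivity
      have := hf.2 d
      simp only [hf', h1]
      push_cast
      nlinarith
  -- inflow identity
  have hinflow : ∀ v, G.inflow f' v = G.inflow f v +
      ε * ((if v = t then 1 else 0) - (if v = s then 1 else 0)) := by
    intro v
    have hA1 : ∑ d ∈ univ.filter (fun d => G.head d = v), (L.count d : ℝ)
        = (L.filter (fun d => G.head d = v)).length :=
      sum_count_filter L (fun d => G.head d = v)
    have hA2 : ∑ d ∈ univ.filter (fun d => G.head d = v), (L.count (G.rev d) : ℝ)
        = (L.filter (fun d => G.tail d = v)).length := by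
      have : ∑ d ∈ univ.filter (fun d => G.head d = v), (L.count (G.rev d) : ℝ)
          = ∑ d ∈ univ.filter (fun d => G.tail d = v), (L.count d : ℝ) := by
        apply Finset.sum_nbij' (i := G.rev) (j := G.rev)
        · intro d hd
          simp only [mem_filter, mem_univ, true_and, G.tail_rev] at *
          exact hd
        · intro d hd
          simp only [mem_filter, mem_univ, true_and, G.head_rev] at *
          exact hd
        · intro d _; exact G.rev_rev d
        · intro d _; exact G.rev_rev d
        · intro d _; rfl
      rw [this]
      exact sum_count_filter L (fun d => G.tail d = v)
    have hwc := walk_count G L s t hLwalk v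
    unfold Dgraph.inflow
    simp only [hf']
    rw [Finset.sum_add_distrib, ← Finset.mul_sum]
    rw [Finset.sum_sub_distrib, hA1, hA2, hwc]
  refine ⟨f', ⟨hanti', hcap'⟩, ?_, ?_⟩
  · intro v hvS hvT
    have hvs : v ≠ s := fun h => hvS (h ▸ hs)
    have hvt : v ≠ t := fun h => hvT (h ▸ ht)
    rw [hinflow v, hcons v hvS hvT]
    simp [hvs, hvt]
  · have : ∑ v ∈ T, G.inflow f' v
        = ∑ v ∈ T, (G.inflow f v + ε * ((if v = t then 1 else 0) - (if v = s then 1 else 0))) :=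
      Finset.sum_congr rfl (fun v _ => hinflow v)
    rw [this, Finset.sum_add_distrib]
    have h1 : ∑ v ∈ T, ε * ((if v = t then 1 else 0) - (if v = s then 1 else 0)) = ε := by
      rw [← Finset.mul_sum, Finset.sum_sub_distrib]
      have hsT : s ∉ T := Finset.disjoint_left.mp hST hs
      rw [Finset.sum_ite_eq' T t (fun _ => (1:ℝ)), Finset.sum_ite_eq' T s (fun _ => (1:ℝ))]
      simp [ht, hsT]
    rw [h1]
    linarith

open Dgraph in
/-- a feasible flow is maximum iff there is no residual source-to-sink path. -/
theorem stmt0 {V D : Type} [Fintype D] [DecidableEq V]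
    (G : Dgraph V D) (c : D → ℝ) (S T : Finset V) (hST : Disjoint S T)
    (f : D → ℝ) (hf : G.Pseudoflow c f)
    (hcons : ∀ v, v ∉ S → v ∉ T → G.inflow f v = 0) :
    (∀ f' : D → ℝ, G.Pseudoflow c f' →
        (∀ v, v ∉ S → v ∉ T → G.inflow f' v = 0) →
        ∑ t ∈ T, G.inflow f' t ≤ ∑ t ∈ T, G.inflow f t)
      ↔ ¬ ∃ s ∈ S, ∃ t ∈ T, G.ResReach (fun d => c d - f d) s t := by
  classical
  constructor
  · intro hmax hpath
    obtain ⟨f', hpf', hcons', hlt⟩ := augment G c S T hST f hf hcons hpath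
    exact absurd (hmax f' hpf' hcons') (not_le.mpr hlt)
  · intro hnopath f' hpf' hcons'
    set A : V → Prop := fun v => ∃ s ∈ S, G.ResReach (fun d => c d - f d) s v with hA
    have hSA : ∀ s ∈ S, A s := fun s hs => ⟨s, hs, Relation.ReflTransGen.refl⟩
    have hTA : ∀ t ∈ T, ¬ A t := by
      rintro t ht ⟨s, hs, hr⟩
      exact hnopath ⟨s, hs, t, ht, hr⟩
    have hcut' := value_eq_cut G S T f' hpf'.1 hcons' A hSA hTA
    have hcutf := value_eq_cut G S T f hf.1 hcons A hSA hTA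
    rw [hcut', hcutf]
    apply Finset.sum_le_sum
    intro d hd
    simp only [mem_filter] at hd
    have hsat : c d ≤ f d := by
      by_contra hlt
      push_neg at hlt
      have hstep : G.ResStep (fun d => c d - f d) (G.tail d) (G.head d) :=
        ⟨d, rfl, rfl, by simp; linarith⟩
      obtain ⟨s, hs, hr⟩ := hd.2.1
      exact hd.2.2 ⟨s, hs, hr.tail hstep⟩
    have h1 := hpf'.2 d
    have h2 := hf.2 d
    linarith
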